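/- In a minimal-length p-representation of a text T with respect to a pattern P, any substring of T that equals a substring of P overlaps at most three p-regions of the representation. -/

import Mathlib

set_option linter.deprecated false

private lemma take_drop_infix_take {α : Type*} (L : List α) (k d e : ℕ) (h : k + d ≤ e) :
    (L.drop k).take d <:+: L.take e := by
  refine ⟨L.take k, ((L.drop k).drop d).take (e - k - d), ?_⟩
  have h1 : L.take e = L.take k ++ (L.drop k).take (e - k) := by
    rw [← List.take_add]; congr 1; omega
  have h2 : (L.drop k).take (e - k)
      = (L.drop k).take d ++ ((L.drop k).drop d).take (e - k - d) := by
    rw [← List.take_add]; congr 1; omega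
  rw [h1, h2, List.append_assoc]

private lemma mono_take_flatten_len {α : Type*} (R : List (List α)) {i j : ℕ} (h : i ≤ j) :
    ((R.take i).flatten).length ≤ ((R.take j).flatten).length := by
  have h1 : (R.take j).take i = R.take i := by
    rw [List.take_take]; congr 1; omega
  have h2 : R.take j = R.take i ++ (R.take j).drop i := by
    conv_lhs => rw [← List.take_append_drop i (R.take j)]
    rw [h1]
  rw [h2, List.flatten_append, List.length_append]
  omega

/-- Three-regions lemma: in a minimal-length p-representation of `T` with respect to
`P`, any substring `T[a…b]` of `T` that equals a substring of `P` overlaps at most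
three p-regions of the representation. -/
theorem substring_overlaps_at_most_three_regions
    {α : Type*} (P T : List α)
    (R : List (List α)) (hjoin : R.flatten = T)
    (hval : ∀ B ∈ R, B ≠ [] ∧ B <:+: P)
    (hmin : ∀ R' : List (List α), R'.flatten = T →
      (∀ B ∈ R', B ≠ [] ∧ B <:+: P) → R.length ≤ R'.length)
    (a b : ℕ) (hab : a ≤ b) (hb : b < T.length)
    (hsub : (T.drop a).take (b + 1 - a) <:+: P) :
    ((Finset.range R.length).filter (fun i =>
        ((R.take i).flatten).length ≤ b ∧ a < ((R.take (i + 1)).flatten).length)).card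
      ≤ 3 := by
  by_contra hcon
  push_neg at hcon
  set F := (Finset.range R.length).filter (fun i =>
      ((R.take i).flatten).length ≤ b ∧ a < ((R.take (i + 1)).flatten).length) with hF
  have hFne : F.Nonempty := Finset.card_pos.mp (by omega)
  have hmF : F.min' hFne ∈ F := F.min'_mem hFne
  have hMF : F.max' hFne ∈ F := F.max'_mem hFne
  set m := F.min' hFne with hm
  set M := F.max' hFne with hM
  have hsubF : F ⊆ Finset.Icc m M := fun x hx =>
    Finset.mem_Icc.mpr ⟨F.min'_le x hx, F.le_max' x hx⟩
  have hcard : F.card ≤ M + 1 - m := by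
    have := Finset.card_le_card hsubF
    rwa [Nat.card_Icc] at this
  have hgap : m + 3 ≤ M := by omega
  simp only [hF, Finset.mem_filter, Finset.mem_range] at hmF hMF
  obtain ⟨hmlt, -, hma⟩ := hmF
  obtain ⟨hMlt, hMb, -⟩ := hMF
  -- hma : a < ((R.take (m+1)).flatten).length
  -- hMb : ((R.take M).flatten).length ≤ b
  have h3lt : m + 3 < R.length := by omega
  have h2lt : m + 2 < R.length := by omega
  have h1lt : m + 1 < R.length := by omega
  have hs3b : ((R.take (m + 3)).flatten).length ≤ b :=
    le_trans (mono_take_flatten_len R hgap) hMb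
  -- decomposition of R
  have hd1 : R.drop (m + 1) = R[m + 1] :: R.drop (m + 2) := List.drop_eq_getElem_cons h1lt
  have hd2 : R.drop (m + 2) = R[m + 2] :: R.drop (m + 3) := List.drop_eq_getElem_cons h2lt
  set Bm : List α := R[m + 1] ++ R[m + 2] with hBm
  -- T decomposition
  have hT : T = (R.take (m + 1)).flatten ++ (Bm ++ (R.drop (m + 3)).flatten) := by
    rw [← hjoin]
    conv_lhs => rw [← List.take_append_drop (m + 1) R, hd1, hd2]
    rw [List.flatten_append, List.flatten_cons, List.flatten_cons, hBm]
    simp only [List.append_assoc]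
  -- prefix-length identity
  have hs3 : ((R.take (m + 3)).flatten).length
      = ((R.take (m + 1)).flatten).length + Bm.length := by
    have ht2 : R.take (m + 2) = R.take (m + 1) ++ [R[m + 1]] := by
      rw [List.take_succ]; simp [List.getElem?_eq_getElem h1lt]
    have ht3 : R.take (m + 3) = R.take (m + 2) ++ [R[m + 2]] := by
      rw [List.take_succ]; simp [List.getElem?_eq_getElem h2lt]
    rw [ht3, ht2]
    simp only [List.flatten_append, List.flatten_cons, List.flatten_nil, List.append_nil,
      List.length_append, hBm]
    omega
  -- Bm as a take-drop of T
  have hBmT : Bm = ((T.drop a).drop (((R.take (m + 1)).flatten).length - a)).take Bm.length := by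
    have hdd : (T.drop a).drop (((R.take (m + 1)).flatten).length - a)
        = T.drop (((R.take (m + 1)).flatten).length) := by
      rw [List.drop_drop]; congr 1; omega
    rw [hdd]
    conv_lhs => rw [show Bm = (Bm ++ (R.drop (m + 3)).flatten).take Bm.length from
      List.take_left.symm]
    congr 1
    conv_rhs => rw [hT]
    rw [List.drop_left]
  have hBmP : Bm <:+: P := by
    refine List.IsInfix.trans ?_ hsub
    rw [hBmT]
    exact take_drop_infix_take _ _ _ _ (by omega)
  -- the shorter representation
  set R' : List (List α) := R.take (m + 1) ++ Bm :: R.drop (m + 3) with hR'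
  have hjoin' : R'.flatten = T := by
    rw [hR', List.flatten_append, List.flatten_cons, hT, List.append_assoc]
  have hval' : ∀ B ∈ R', B ≠ [] ∧ B <:+: P := by
    intro B hB
    rw [hR'] at hB
    rcases List.mem_append.mp hB with h | h
    · exact hval B (List.take_subset _ _ h)
    · rcases List.mem_cons.mp h with h | h
      · subst h
        refine ⟨?_, hBmP⟩
        have h1 := (hval R[m + 1] (List.getElem_mem h1lt)).1
        simp only [hBm, ne_eq, List.append_eq_nil_iff]
        exact fun hc => h1 hc.1
      · exact hval B (List.drop_subset _ _ h)
  have hlen : R'.length < R.length := by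
    rw [hR']
    simp only [List.length_append, List.length_take, List.length_cons, List.length_drop]
    omega
  exact absurd (hmin R' hjoin' hval') (by omega)
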